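/- Let t ≥ 1, let λ_1, …, λ_t be positive integers, and let n ≥ t. When the monomial symmetric polynomial m_{λ_1,…,λ_t}(x_1,…,x_n) = Σ_{i_1,…,i_t distinct} x_{i_1}^{λ_1}⋯x_{i_t}^{λ_t} is written as a polynomial expression in the power sums p_j(x) = x_1^j + ⋯ + x_n^j, the coefficient of p_{λ_1+⋯+λ_t}(x) is (−1)^{t−1}·(t−1)!. -/

import Mathlib

open MvPolynomial

/-- The power sum `p_d = x_1^d + ⋯ + x_n^d`. -/
noncomputable def psum (n d : ℕ) : MvPolynomial (Fin n) ℝ :=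
  ∑ i, (X i : MvPolynomial (Fin n) ℝ) ^ d

/-- The augmented monomial symmetric polynomial
`m_{λ₁,…,λ_t}(x) = ∑_{i₁,…,i_t distinct} x_{i₁}^{λ₁} ⋯ x_{i_t}^{λ_t}`. -/
noncomputable def mSym (n t : ℕ) (lam : Fin t → ℕ) : MvPolynomial (Fin n) ℝ :=
  ∑ f ∈ Finset.univ.filter (fun f : Fin t → Fin n => Function.Injective f),
    ∏ j, (X (f j) : MvPolynomial (Fin n) ℝ) ^ lam j


section Aux
open Finset Function

lemma snoc_inj {n s : ℕ} {f : Fin s → Fin n} {i : Fin n}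
    (hf : Function.Injective f) (hi : ∀ j, f j ≠ i) :
    Function.Injective (Fin.snoc f i : Fin (s+1) → Fin n) := by
  intro a b hab
  induction a using Fin.lastCases with
  | last =>
    induction b using Fin.lastCases with
    | last => rfl
    | cast b =>
      rw [Fin.snoc_last, Fin.snoc_castSucc] at hab
      exact absurd hab.symm (hi b)
  | cast a =>
    induction b using Fin.lastCases with
    | last =>
      rw [Fin.snoc_last, Fin.snoc_castSucc] at hab
      exact absurd hab (hi a)
    | cast b =>
      rw [Fin.snoc_castSucc, Fin.snoc_castSucc] at hab
      exact congrArg Fin.castSucc (hf hab)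

lemma key (n s : ℕ) (lam : Fin (s+1) → ℕ) :
    psum n (lam (Fin.last s)) * mSym n s (fun j => lam j.castSucc)
      = mSym n (s+1) lam
        + ∑ j : Fin s, mSym n s
            (Function.update (fun k => lam k.castSucc) j (lam j.castSucc + lam (Fin.last s))) := by
  classical
  set d := lam (Fin.last s) with hd
  set injS : Finset (Fin s → Fin n) :=
    Finset.univ.filter (fun f : Fin s → Fin n => Function.Injective f) with hinjS
  have hLHS : psum n d * mSym n s (fun j => lam j.castSucc)
      = ∑ f ∈ injS, ∑ i : Fin n,
          (X i : MvPolynomial (Fin n) ℝ) ^ d * ∏ j, (X (f j)) ^ lam j.castSucc := by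
    rw [show _root_.psum n d = ∑ i, (X i : MvPolynomial (Fin n) ℝ) ^ d from rfl, mSym, Finset.sum_mul_sum, Finset.sum_comm]
  rw [hLHS]
  have hsplit : ∀ f ∈ injS,
      (∑ i : Fin n, (X i : MvPolynomial (Fin n) ℝ) ^ d * ∏ j, (X (f j)) ^ lam j.castSucc)
      = (∑ i ∈ (Finset.univ.image f)ᶜ, (X i) ^ d * ∏ j, (X (f j)) ^ lam j.castSucc)
        + ∑ j : Fin s, (X (f j)) ^ d * ∏ k, (X (f k)) ^ lam k.castSucc := by
    intro f hf
    have hinj : Function.Injective f := (Finset.mem_filter.mp hf).2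
    rw [← Finset.sum_add_sum_compl (Finset.univ.image f), add_comm]
    congr 1
    rw [Finset.sum_image (fun a _ b _ h => hinj h)]
  rw [Finset.sum_congr rfl hsplit, Finset.sum_add_distrib]
  congr 1
  · -- injective part = mSym (s+1)
    rw [Finset.sum_sigma', mSym]
    refine Finset.sum_nbij' (fun p => Fin.snoc p.1 p.2) (fun g => ⟨Fin.init g, g (Fin.last s)⟩)
      ?_ ?_ ?_ ?_ ?_
    · rintro ⟨f, i⟩ hp
      rw [Finset.mem_sigma] at hp
      obtain ⟨hf, hi⟩ := hp
      rw [Finset.mem_compl, Finset.mem_image] at hi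
      push_neg at hi
      simp only [Finset.mem_univ, true_implies] at hi
      simp only [Finset.mem_filter, Finset.mem_univ, true_and]
      exact snoc_inj (Finset.mem_filter.mp hf).2 hi
    · intro g hg
      rw [Finset.mem_filter] at hg
      rw [Finset.mem_sigma]
      constructor
      · simp only [hinjS, Finset.mem_filter, Finset.mem_univ, true_and]
        exact fun a b hab => Fin.castSucc_injective s (hg.2 hab)
      · rw [Finset.mem_compl, Finset.mem_image]
        push_neg
        intro j _
        exact fun h => absurd (hg.2 h) (by simp [Fin.ext_iff, Fin.init]; omega)
    · rintro ⟨f, i⟩ hp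
      simp [Fin.init_snoc, Fin.snoc_last]
    · intro g hg
      exact Fin.snoc_init_self g
    · rintro ⟨f, i⟩ hp
      rw [Fin.prod_univ_castSucc]
      simp only [Fin.snoc_castSucc, Fin.snoc_last]
      rw [mul_comm]
  · -- merged part
    rw [Finset.sum_comm]
    refine Finset.sum_congr rfl fun j _ => ?_
    rw [mSym]
    refine Finset.sum_congr rfl fun f hf => ?_
    have h1 : ∀ k, (X (f k) : MvPolynomial (Fin n) ℝ)
        ^ (Function.update (fun k => lam k.castSucc) j (lam j.castSucc + d) k)
        = Function.update (fun k => (X (f k) : MvPolynomial (Fin n) ℝ) ^ lam k.castSucc) j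
            ((X (f j)) ^ (lam j.castSucc + d)) k := by
      intro k
      by_cases hk : k = j
      · subst hk; simp
      · simp [Function.update_of_ne hk]
    rw [Finset.prod_congr rfl fun k _ => h1 k,
      Finset.prod_update_of_mem (Finset.mem_univ j),
      Finset.prod_eq_mul_prod_sdiff_singleton_of_mem (Finset.mem_univ j)
        (fun k => (X (f k) : MvPolynomial (Fin n) ℝ) ^ lam k.castSucc)]
    rw [pow_add, mul_assoc, mul_comm ((X (f j) : MvPolynomial (Fin n) ℝ) ^ lam j.castSucc)]
    ring


noncomputable def PP (n : ℕ) : Multiset ℕ → MvPolynomial (Fin n) ℝ :=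
  fun μ => (μ.map (psum n)).prod

lemma main (n : ℕ) : ∀ t, 1 ≤ t → ∀ (lam : Fin t → ℕ), (∀ j, 0 < lam j) →
    ∃ c : Multiset ℕ →₀ ℝ,
      (∀ μ ∈ c.support, (∀ a ∈ μ, 0 < a) ∧ μ.sum = ∑ j, lam j) ∧
      mSym n t lam = Finsupp.linearCombination ℝ (PP n) c ∧
      c ({∑ j, lam j} : Multiset ℕ) = (-1 : ℝ) ^ (t - 1) * (t - 1).factorial := by
  intro t
  induction t with
  | zero => omega
  | succ s ih =>
    intro _ lam hpos
    rcases Nat.eq_zero_or_pos s with hs | hs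
    · subst hs
      refine ⟨Finsupp.single {lam 0} 1, ?_, ?_, ?_⟩
      · intro μ hμ
        have := Finsupp.support_single_subset hμ
        rw [Finset.mem_singleton] at this
        subst this
        constructor
        · intro a ha
          rw [Multiset.mem_singleton] at ha
          subst ha; exact hpos 0
        · simp
      · have hmS : mSym n 1 lam = psum n (lam 0) := by
          have hall : ∀ f ∈ (Finset.univ : Finset (Fin 1 → Fin n)),
              Function.Injective f := fun f _ a b _ => Subsingleton.elim a b
          rw [mSym, Finset.filter_true_of_mem hall]
          rw [show psum n (lam 0) = ∑ i, (X i : MvPolynomial (Fin n) ℝ) ^ lam 0 from rfl]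
          refine Fintype.sum_equiv (Equiv.funUnique (Fin 1) (Fin n)) _ _ fun f => ?_
          simp [Fin.prod_univ_one, Equiv.funUnique]
        rw [hmS, Finsupp.linearCombination_single, one_smul, PP]
        simp
      · simp
    · -- inductive step
      obtain ⟨c₀, h₀supp, h₀eq, h₀val⟩ := ih hs (fun j => lam j.castSucc) (fun j => hpos _)
      choose cj hjsupp hjeq hjval using fun j : Fin s =>
        ih hs (Function.update (fun k => lam k.castSucc) j (lam j.castSucc + lam (Fin.last s)))
          (fun k => by
            rcases eq_or_ne k j with rfl | hk
            · simp only [Function.update_self]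
              have := hpos k.castSucc
              omega
            · rw [Function.update_of_ne hk]; exact hpos _)
      set D := lam (Fin.last s) with hD
      have hS : ∑ j, lam j = (∑ j : Fin s, lam j.castSucc) + D := Fin.sum_univ_castSucc lam
      have hSpos : 0 < ∑ j : Fin s, lam j.castSucc :=
        Finset.sum_pos (fun j _ => hpos _) (by simp [Finset.univ_nonempty_iff, ← Fin.pos_iff_nonempty, hs])
      have hmerge : ∀ j : Fin s,
          (∑ k, Function.update (fun k => lam k.castSucc) j (lam j.castSucc + D) k)
            = ∑ k, lam k := by
        intro j
        rw [Finset.sum_update_of_mem (Finset.mem_univ j), hS]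
        have h3 := Finset.sum_eq_add_sum_sdiff_singleton_of_mem (Finset.mem_univ j)
          (fun k : Fin s => lam k.castSucc)
        omega
      set e : Multiset ℕ ↪ Multiset ℕ := ⟨fun μ => μ + {D}, fun a b h => by simpa using h⟩ with he
      refine ⟨Finsupp.embDomain e c₀ - ∑ j, cj j, ?_, ?_, ?_⟩
      · intro μ hμ
        rcases Finset.mem_union.mp (Finsupp.support_sub hμ) with h | h
        · rw [Finsupp.support_embDomain, Finset.mem_map] at h
          obtain ⟨ν, hν, rfl⟩ := h
          obtain ⟨hν1, hν2⟩ := h₀supp ν hν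
          constructor
          · intro a ha
            simp only [he, Function.Embedding.coeFn_mk, DFunLike.coe, Multiset.mem_add,
              Multiset.mem_singleton] at ha
            rcases ha with ha | rfl
            · exact hν1 a ha
            · exact hpos _
          · simp only [he, Function.Embedding.coeFn_mk, DFunLike.coe, Multiset.sum_add,
              Multiset.sum_singleton, hν2, hS]
        · have := Finsupp.support_finset_sum h
          rw [Finset.mem_biUnion] at this
          obtain ⟨j, _, hj⟩ := this
          obtain ⟨h1, h2⟩ := hjsupp j μ hj
          exact ⟨h1, by rw [h2, hmerge]⟩
      · have hrec : mSym n (s+1) lam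
            = psum n D * mSym n s (fun j => lam j.castSucc)
              - ∑ j : Fin s, mSym n s
                  (Function.update (fun k => lam k.castSucc) j (lam j.castSucc + D)) := by
          rw [key n s lam]; ring
        have hemb : Finsupp.linearCombination ℝ (PP n) (Finsupp.embDomain e c₀)
            = psum n D * Finsupp.linearCombination ℝ (PP n) c₀ := by
          rw [Finsupp.linearCombination_apply, Finsupp.linearCombination_apply,
            Finsupp.sum_embDomain, Finsupp.sum, Finsupp.sum, Finset.mul_sum]
          refine Finset.sum_congr rfl fun μ _ => ?_
          simp only [he, Function.Embedding.coeFn_mk, DFunLike.coe, PP, Multiset.map_add,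
            Multiset.prod_add, Multiset.map_singleton, Multiset.prod_singleton]
          rw [mul_smul_comm]
          rw [mul_comm]
        rw [hrec, map_sub, map_sum, hemb, h₀eq]
        congr 1
        exact Finset.sum_congr rfl fun j _ => hjeq j
      · have hnotin : ({∑ j, lam j} : Multiset ℕ) ∉ Set.range e := by
          rintro ⟨μ, hμ⟩
          simp only [he, Function.Embedding.coeFn_mk, DFunLike.coe] at hμ
          have hc := congrArg Multiset.card hμ
          simp at hc
          subst hc
          simp at hμ
          omega
        rw [Finsupp.sub_apply, Finsupp.embDomain_notin_range _ _ _ hnotin,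
          Finsupp.finset_sum_apply]
        have : ∀ j : Fin s, (cj j) ({∑ k, lam k} : Multiset ℕ)
            = (-1 : ℝ) ^ (s - 1) * (s - 1).factorial := by
          intro j
          have := hjval j
          rwa [hmerge j] at this
        rw [Finset.sum_congr rfl fun j _ => this j, Finset.sum_const, Finset.card_univ,
          Fintype.card_fin, nsmul_eq_mul]
        have h1 : ((s).factorial : ℝ) = s * (s - 1).factorial := by
          rw [← Nat.mul_factorial_pred hs.ne']; push_cast; ring
        have h2 : (-1 : ℝ) ^ s = (-1) ^ (s - 1) * (-1) := by
          rw [← pow_succ]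
          congr 1
          omega
        simp only [Nat.add_sub_cancel, h1, h2]
        ring

end Aux

/-- when `m_{λ₁,…,λ_t}` is written as a linear combination of products of
power sums `p_{μ₁}⋯p_{μ_s}` (indexed by multisets `μ` of positive integers with
`μ.sum = λ₁+⋯+λ_t`), the coefficient of `p_{λ₁+⋯+λ_t}` is `(-1)^(t-1) * (t-1)!`. -/
theorem stmt3 (t : ℕ) (ht : 1 ≤ t) (n : ℕ) (hn : t ≤ n) (lam : Fin t → ℕ)
    (hpos : ∀ j, 0 < lam j) :
    ∃ c : Multiset ℕ →₀ ℝ,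
      (∀ μ ∈ c.support, (∀ a ∈ μ, 0 < a) ∧ μ.sum = ∑ j, lam j) ∧
      mSym n t lam = c.sum (fun μ coef => coef • (μ.map (psum n)).prod) ∧
      c ({∑ j, lam j} : Multiset ℕ) = (-1 : ℝ) ^ (t - 1) * (t - 1).factorial := by
  obtain ⟨c, h1, h2, h3⟩ := main n t ht lam hpos
  exact ⟨c, h1, by rw [h2, Finsupp.linearCombination_apply]; rfl, h3⟩
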